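/- Let w denote the normalized p-adic valuation on ℤ (so w(p) = 1). For every nonnegative integer j and positive integer h, we have w(j!) − ⌊j/p^h⌋ · w((p^h)!) − w((j − p^h·⌊j/p^h⌋)!) ≤ j/(p^h·(p−1)). -/

import Mathlib

lemma digits_len_le_of_lt_pow {p h r : ℕ} (hp : 1 < p) (hr : r < p ^ h) :
    (p.digits r).length ≤ h := by
  rcases Nat.eq_zero_or_pos r with rfl | hr0
  · simp
  · rw [Nat.digits_len p r hp hr0.ne']
    exact Nat.log_lt_of_lt_pow hr0.ne' hr

lemma sum_digits_split {p h q r : ℕ} (hp : 1 < p) (hr : r < p ^ h) :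
    (p.digits (r + p ^ h * q)).sum = (p.digits r).sum + (p.digits q).sum := by
  rcases Nat.eq_zero_or_pos q with rfl | hq0
  · simp
  · have hlen : (p.digits r).length ≤ h := digits_len_le_of_lt_pow hp hr
    have hsplit := Nat.digits_append_zeroes_append_digits
      (b := p) (k := h - (p.digits r).length) (m := q) (n := r) hp hq0
    rw [Nat.add_sub_cancel' hlen] at hsplit
    rw [← hsplit]
    simp

lemma sum_digits_pow {p : ℕ} (hp : 1 < p) (h : ℕ) :
    (p.digits (p ^ h)).sum = 1 := by
  have : p ^ h = p ^ h * 1 := (mul_one _).symm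
  rw [this, Nat.digits_base_pow_mul hp one_pos]
  have : p.digits 1 = [1] := Nat.digits_def' hp one_pos ▸ by
    simp [Nat.digits_def' hp one_pos, Nat.mod_eq_of_lt hp, Nat.div_eq_of_lt hp]
  simp [this]

/-- For `w` the normalized `p`-adic valuation, `j ≥ 0` and `h ≥ 1`:
`w(j!) − ⌊j/p^h⌋·w((p^h)!) − w((j − p^h·⌊j/p^h⌋)!) ≤ j/(p^h·(p−1))`. -/
theorem stmt_6 (p : ℕ) [Fact p.Prime] (h j : ℕ) (hh : 1 ≤ h) :
    (padicValNat p (Nat.factorial j) : ℝ)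
      - (j / p ^ h : ℕ) * (padicValNat p (Nat.factorial (p ^ h)) : ℝ)
      - (padicValNat p (Nat.factorial (j - p ^ h * (j / p ^ h))) : ℝ)
      ≤ (j : ℝ) / ((p : ℝ) ^ h * ((p : ℝ) - 1)) := by
  have hp : p.Prime := Fact.out
  have hp1 : 1 < p := hp.one_lt
  have hppos : (0 : ℝ) < (p : ℝ) - 1 := by
    have : (1 : ℝ) < p := by exact_mod_cast hp1
    linarith
  set q := j / p ^ h with hqdef
  set r := j - p ^ h * q with hrdef
  have hphpos : 0 < p ^ h := Nat.pow_pos (by omega)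
  have hrmod : r = j % p ^ h := by
    rw [hrdef, hqdef, Nat.mod_def]
  have hrlt : r < p ^ h := hrmod ▸ Nat.mod_lt _ hphpos
  have hjeq : p ^ h * q + r = j := by
    rw [hrmod, hqdef]; exact Nat.div_add_mod j (p ^ h)
  -- Legendre in ℝ
  have key : ∀ n : ℕ, ((p : ℝ) - 1) * (padicValNat p n.factorial : ℝ)
      = (n : ℝ) - ((p.digits n).sum : ℝ) := by
    intro n
    have h1 := sub_one_mul_padicValNat_factorial (p := p) n
    have h2 := Nat.digit_sum_le p n
    have := congrArg (Nat.cast : ℕ → ℝ) h1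
    rw [Nat.cast_sub h2, Nat.cast_mul, Nat.cast_sub hp1.le, Nat.cast_one] at this
    exact this
  have e1 := key j
  have e3 := key r
  have e2 : ((p : ℝ) - 1) * (padicValNat p (p ^ h).factorial : ℝ)
      = (p : ℝ) ^ h - 1 := by
    have := key (p ^ h)
    rw [sum_digits_pow hp1 h] at this
    push_cast at this
    exact this
  have hSsplit : ((p.digits j).sum : ℝ)
      = ((p.digits r).sum : ℝ) + ((p.digits q).sum : ℝ) := by
    have : (p.digits j).sum = (p.digits r).sum + (p.digits q).sum := by
      conv_lhs => rw [← hjeq, add_comm (p ^ h * q) r]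
      exact sum_digits_split hp1 hrlt
    exact_mod_cast this
  have hjcast : (j : ℝ) = (p : ℝ) ^ h * (q : ℝ) + (r : ℝ) := by
    exact_mod_cast (congrArg (Nat.cast : ℕ → ℝ) hjeq).symm
  have hmul : ((padicValNat p j.factorial : ℝ)
      - (q : ℝ) * (padicValNat p (p ^ h).factorial : ℝ)
      - (padicValNat p r.factorial : ℝ)) * ((p : ℝ) - 1)
      = (q : ℝ) - ((p.digits q).sum : ℝ) := by
    linear_combination e1 - e3 - (q : ℝ) * e2 + hjcast - hSsplit
  have heq : (padicValNat p j.factorial : ℝ)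
      - (q : ℝ) * (padicValNat p (p ^ h).factorial : ℝ)
      - (padicValNat p r.factorial : ℝ)
      = ((q : ℝ) - ((p.digits q).sum : ℝ)) / ((p : ℝ) - 1) :=
    (eq_div_iff hppos.ne').mpr hmul
  rw [heq, ← div_div]
  have hqle : (q : ℝ) ≤ (j : ℝ) / (p : ℝ) ^ h := by
    have := Nat.cast_div_le (α := ℝ) (m := j) (n := p ^ h)
    push_cast at this
    exact this
  have hSq : (0 : ℝ) ≤ ((p.digits q).sum : ℝ) := Nat.cast_nonneg _
  exact div_le_div_of_nonneg_right (by linarith) hppos.le
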